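/- Let U be a finite-dimensional real normed vector space with dual U*, V = U×U*, and let S : U×U → ℝ be C¹. Suppose φ : V → V is a bijection generated by S, i.e. for all p,q ∈ U and p*,q* ∈ U*: φ(p,p*) = (q,q*) if and only if p* = D₁S(p,q) and q* = −D₂S(p,q). Let h : U → U be a C¹ diffeomorphism and define Ψ : V → V by Ψ(u,u*) = (h(u), −u* ∘ (Dh(u))⁻¹). Then Ψ⁻¹ ∘ φ ∘ Ψ = φ⁻¹ if and only if there exists a constant c ∈ ℝ with S(h(ū), h(u)) = S(u,ū) + c for all (u,ū) ∈ U×U. (The paper's Proposition: the anti-symplectic lift of h is a reversal symmetry of φ if and only if S is invariant under the reversal action of h, up to a constant.) -/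

import Mathlib

/-- Partial Fréchet derivative of `S : U × U → ℝ` with respect to the first argument. -/
noncomputable def D1 {U : Type} [NormedAddCommGroup U] [NormedSpace ℝ U]
    (S : U × U → ℝ) (p q : U) : U →L[ℝ] ℝ :=
  fderiv ℝ (fun w => S (w, q)) p

/-- Partial Fréchet derivative of `S : U × U → ℝ` with respect to the second argument. -/
noncomputable def D2 {U : Type} [NormedAddCommGroup U] [NormedSpace ℝ U]
    (S : U × U → ℝ) (p q : U) : U →L[ℝ] ℝ :=
  fderiv ℝ (fun w => S (p, w)) q

/-- the anti-symplectic lift `Ψ(u,u*) = (h(u), −u* ∘ (Dh(u))⁻¹)` of a C¹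
diffeomorphism `h` is a reversal symmetry of the bijective symplectic map `φ` generated
by `S` if and only if `S` is invariant (up to a constant) under the reversal action
`(u,ū) ↦ (h(ū), h(u))`. Here `(Dh(u))⁻¹ = D(h⁻¹)(h(u))`. -/
theorem stmt_13 (U : Type) [NormedAddCommGroup U] [NormedSpace ℝ U] [FiniteDimensional ℝ U]
    (S : U × U → ℝ) (hS : ContDiff ℝ 1 S)
    (φ : (U × (U →L[ℝ] ℝ)) ≃ (U × (U →L[ℝ] ℝ)))
    (hgen : ∀ (p q : U) (pstar qstar : U →L[ℝ] ℝ),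
      φ (p, pstar) = (q, qstar) ↔ pstar = D1 S p q ∧ qstar = -D2 S p q)
    (h hinv : U → U)
    (hli : Function.LeftInverse hinv h) (hri : Function.RightInverse hinv h)
    (hC1 : ContDiff ℝ 1 h) (hinvC1 : ContDiff ℝ 1 hinv)
    (Ψ : U × (U →L[ℝ] ℝ) → U × (U →L[ℝ] ℝ))
    (hΨ : ∀ (u : U) (us : U →L[ℝ] ℝ),
      Ψ (u, us) = (h u, -(us.comp (fderiv ℝ hinv (h u))))) :
    (Function.invFun Ψ ∘ ⇑φ ∘ Ψ = ⇑φ.symm) ↔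
      ∃ c : ℝ, ∀ u ub : U, S (h ub, h u) = S (u, ub) + c := by
  classical
  have hSd : Differentiable ℝ S := hS.differentiable one_ne_zero
  have hhd : Differentiable ℝ h := hC1.differentiable one_ne_zero
  have hid : Differentiable ℝ hinv := hinvC1.differentiable one_ne_zero
  -- chain rule inverse facts
  have hhi : ∀ u : U, (fderiv ℝ hinv (h u)).comp (fderiv ℝ h u) = ContinuousLinearMap.id ℝ U := by
    intro u
    have h1 : fderiv ℝ (hinv ∘ h) u = ContinuousLinearMap.id ℝ U := by
      have e : hinv ∘ h = id := funext hli
      rw [e, fderiv_id]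
    rw [← h1, fderiv_comp u (hid (h u)) (hhd u)]
  have hih : ∀ v : U, (fderiv ℝ h (hinv v)).comp (fderiv ℝ hinv v) = ContinuousLinearMap.id ℝ U := by
    intro v
    have h1 : fderiv ℝ (h ∘ hinv) v = ContinuousLinearMap.id ℝ U := by
      have e : h ∘ hinv = id := funext hri
      rw [e, fderiv_id]
    rw [← h1, fderiv_comp v (hhd (hinv v)) (hid v)]
  have hih' : ∀ u : U, (fderiv ℝ h u).comp (fderiv ℝ hinv (h u)) = ContinuousLinearMap.id ℝ U := by
    intro u
    have e := hih (h u)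
    rwa [hli u] at e
  -- explicit inverse of Ψ
  set g : U × (U →L[ℝ] ℝ) → U × (U →L[ℝ] ℝ) :=
    fun x => (hinv x.1, -(x.2.comp (fderiv ℝ h (hinv x.1)))) with hgdef
  have hgΨ : ∀ x, g (Ψ x) = x := by
    rintro ⟨u, us⟩
    rw [hΨ u us]
    simp only [hgdef, hli u]
    refine Prod.ext rfl ?_
    simp only [ContinuousLinearMap.neg_comp, neg_neg, ContinuousLinearMap.comp_assoc, hhi u,
      ContinuousLinearMap.comp_id]
  have hΨg : ∀ x, Ψ (g x) = x := by
    rintro ⟨v, vs⟩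
    simp only [hgdef]
    rw [hΨ]
    simp only [hri v]
    refine Prod.ext rfl ?_
    simp only [ContinuousLinearMap.neg_comp, neg_neg, ContinuousLinearMap.comp_assoc]
    rw [hih v, ContinuousLinearMap.comp_id]
  have hinvΨ : Function.invFun Ψ = g := by
    funext y
    have hinj : Function.Injective Ψ := Function.LeftInverse.injective hgΨ
    calc Function.invFun Ψ y = Function.invFun Ψ (Ψ (g y)) := by rw [hΨg y]
      _ = g y := Function.leftInverse_invFun hinj (g y)
  have key : (Function.invFun Ψ ∘ ⇑φ ∘ Ψ = ⇑φ.symm) ↔ ∀ x, φ (Ψ x) = Ψ (φ.symm x) := by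
    rw [hinvΨ]
    constructor
    · intro hE x
      have hx := congrFun hE x
      simp only [Function.comp_apply] at hx
      calc φ (Ψ x) = Ψ (g (φ (Ψ x))) := (hΨg _).symm
        _ = Ψ (φ.symm x) := by rw [hx]
    · intro hA
      funext x
      simp only [Function.comp_apply]
      rw [hA x, hgΨ]
  -- slice differentiability
  have hD2slice : ∀ a : U, Differentiable ℝ (fun z => S (a, z)) := fun a =>
    hSd.comp ((differentiable_const a).prodMk differentiable_id)
  have hD1slice : ∀ a : U, Differentiable ℝ (fun z => S (z, a)) := fun a =>
    hSd.comp (differentiable_id.prodMk (differentiable_const a))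
  -- chain rules for partial slots
  have hcomp2 : ∀ (a u : U) (f : U → U), Differentiable ℝ f →
      fderiv ℝ (fun w => S (a, f w)) u = (D2 S a (f u)).comp (fderiv ℝ f u) := by
    intro a u f hf
    rw [show (fun w => S (a, f w)) = (fun z => S (a, z)) ∘ f from rfl,
      fderiv_comp u ((hD2slice a) (f u)) (hf u)]
    rfl
  have hcomp1 : ∀ (a u : U) (f : U → U), Differentiable ℝ f →
      fderiv ℝ (fun w => S (f w, a)) u = (D1 S (f u) a).comp (fderiv ℝ f u) := by
    intro a u f hf
    rw [show (fun w => S (f w, a)) = (fun z => S (z, a)) ∘ f from rfl,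
      fderiv_comp u ((hD1slice a) (f u)) (hf u)]
    rfl
  -- full derivative from partials
  have hpart : ∀ (f : U × U → ℝ), Differentiable ℝ f → ∀ (p q x y : U),
      fderiv ℝ f (p, q) (x, y) =
        fderiv ℝ (fun w => f (w, q)) p x + fderiv ℝ (fun w => f (p, w)) q y := by
    intro f hf p q x y
    have h1 : HasFDerivAt (fun w => f (w, q))
        ((fderiv ℝ f (p, q)).comp ((ContinuousLinearMap.id ℝ U).prod 0)) p :=
      ((hf (p, q)).hasFDerivAt).comp p ((hasFDerivAt_id p).prodMk (hasFDerivAt_const q p))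
    have h2 : HasFDerivAt (fun w => f (p, w))
        ((fderiv ℝ f (p, q)).comp ((0 : U →L[ℝ] U).prod (ContinuousLinearMap.id ℝ U))) q :=
      ((hf (p, q)).hasFDerivAt).comp q ((hasFDerivAt_const p q).prodMk (hasFDerivAt_id q))
    have e1 : fderiv ℝ (fun w => f (w, q)) p x = fderiv ℝ f (p, q) (x, 0) := by
      rw [h1.fderiv]; rfl
    have e2 : fderiv ℝ (fun w => f (p, w)) q y = fderiv ℝ f (p, q) (0, y) := by
      rw [h2.fderiv]; rfl
    rw [e1, e2, show ((x, y) : U × U) = (x, (0 : U)) + ((0 : U), y) by simp, map_add]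
  -- the central equivalence with derivative identities
  have hcentral : (∀ x, φ (Ψ x) = Ψ (φ.symm x)) ↔
      (∀ p q : U, D1 S p q = (D2 S (h q) (h p)).comp (fderiv ℝ h p) ∧
                  D2 S p q = (D1 S (h q) (h p)).comp (fderiv ℝ h q)) := by
    constructor
    · intro H p q
      have hφ : φ (p, D1 S p q) = (q, -D2 S p q) := (hgen p q _ _).mpr ⟨rfl, rfl⟩
      have hsymm : φ.symm (q, -D2 S p q) = (p, D1 S p q) := by
        rw [← hφ, Equiv.symm_apply_apply]
      have hx := H (q, -D2 S p q)
      rw [hsymm, hΨ, hΨ] at hx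
      simp only [ContinuousLinearMap.neg_comp, neg_neg] at hx
      obtain ⟨eq1, eq2⟩ := (hgen (h q) (h p) _ _).mp hx
      constructor
      · have e := congrArg (fun L : U →L[ℝ] ℝ => L.comp (fderiv ℝ h p)) (neg_inj.mp eq2)
        rw [ContinuousLinearMap.comp_assoc, hhi p, ContinuousLinearMap.comp_id] at e
        exact e
      · have e := congrArg (fun L : U →L[ℝ] ℝ => L.comp (fderiv ℝ h q)) eq1
        rw [ContinuousLinearMap.comp_assoc, hhi q, ContinuousLinearMap.comp_id] at e
        exact e.symm ▸ e
    · intro H x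
      obtain ⟨q, qs⟩ := x
      rcases hval : φ.symm (q, qs) with ⟨p, ps⟩
      have hφ : φ (p, ps) = (q, qs) := by rw [← hval]; exact φ.apply_symm_apply _
      obtain ⟨hps, hqs⟩ := (hgen p q ps qs).mp hφ
      subst hps; subst hqs
      rw [hΨ, hΨ]
      refine (hgen (h q) (h p) _ _).mpr ⟨?_, ?_⟩
      · simp only [ContinuousLinearMap.neg_comp, neg_neg]
        rw [(H p q).2, ContinuousLinearMap.comp_assoc, hih' q, ContinuousLinearMap.comp_id]
      · rw [(H p q).1, ContinuousLinearMap.comp_assoc, hih' p, ContinuousLinearMap.comp_id]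
  rw [key, hcentral]
  constructor
  · intro H
    set T : U × U → ℝ := fun z => S (h z.2, h z.1) with hTdef
    have hTd : Differentiable ℝ T :=
      hSd.comp ((hhd.comp differentiable_snd).prodMk (hhd.comp differentiable_fst))
    have hder : ∀ z : U × U, fderiv ℝ (fun z => T z - S z) z = 0 := by
      rintro ⟨p, q⟩
      rw [fderiv_fun_sub (hTd (p, q)) (hSd (p, q)), sub_eq_zero]
      refine ContinuousLinearMap.ext fun xy => ?_
      obtain ⟨x, y⟩ := xy
      rw [hpart T hTd p q x y, hpart S hSd p q x y]
      have eT1 : fderiv ℝ (fun w => T (w, q)) p = fderiv ℝ (fun w => S (w, q)) p := by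
        rw [show (fun w => T (w, q)) = fun w => S (h q, h w) from rfl,
          hcomp2 (h q) p h hhd, ← (H p q).1]
        rfl
      have eT2 : fderiv ℝ (fun w => T (p, w)) q = fderiv ℝ (fun w => S (p, w)) q := by
        rw [show (fun w => T (p, w)) = fun w => S (h w, h p) from rfl,
          hcomp1 (h p) q h hhd, ← (H p q).2]
        rfl
      rw [eT1, eT2]
    have hconst : ∀ z : U × U, T z - S z = T (0, 0) - S (0, 0) := fun z =>
      is_const_of_fderiv_eq_zero (hTd.sub hSd) hder z (0, 0)
    refine ⟨T (0, 0) - S (0, 0), fun u ub => ?_⟩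
    have := hconst (u, ub)
    simp only [hTdef] at this ⊢
    linarith
  · rintro ⟨c, hc⟩ p q
    constructor
    · have e : (fun w => S (h q, h w)) = fun w => S (w, q) + c := funext fun w => hc w q
      have e2 := hcomp2 (h q) p h hhd
      rw [e, fderiv_add_const] at e2
      exact e2
    · have e : (fun w => S (h w, h p)) = fun w => S (p, w) + c := funext fun w => hc p w
      have e2 := hcomp1 (h p) q h hhd
      rw [e, fderiv_add_const] at e2
      exact e2
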